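/- Let A be an integral domain, f ∈ A nonzero, and I ⊆ A an ideal containing f. Then the subring A[I/f] := { a/f^k : a ∈ I^k, k ≥ 0 } of the localization A_f is isomorphic as an A-algebra to the quotient of the Rees algebra A[tI] = ⊕_{n≥0} Iⁿtⁿ ⊆ A[t] by the ideal generated by (1 - tf). -/

import Mathlib

open Polynomial

open Polynomial

/-- If `(1 - C f * X) * q` has all coefficients in the right powers of `I`
(and `f ∈ I`), then so does `q`. -/
lemma stmt5_aux_coeff {A : Type*} [CommRing A] {f : A} {I : Ideal A} (hfI : f ∈ I)
    (q : Polynomial A) (hq : (1 - Polynomial.C f * Polynomial.X) * q ∈ reesAlgebra I) :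
    q ∈ reesAlgebra I := by
  rw [mem_reesAlgebra_iff] at hq ⊢
  intro i
  induction i with
  | zero =>
      rw [pow_zero, Ideal.one_eq_top]
      exact Submodule.mem_top
  | succ i ih =>
      have hcoeff : ((1 - Polynomial.C f * Polynomial.X) * q).coeff (i + 1)
          = q.coeff (i + 1) - f * q.coeff i := by
        rw [sub_mul, one_mul, Polynomial.coeff_sub]
        congr 1
        rw [mul_assoc, Polynomial.coeff_C_mul, Polynomial.coeff_X_mul]
      have : q.coeff (i + 1)
          = ((1 - Polynomial.C f * Polynomial.X) * q).coeff (i + 1) + f * q.coeff i := by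
        rw [hcoeff]; ring
      rw [this]
      refine add_mem (hq (i + 1)) ?_
      rw [pow_succ]
      rw [mul_comm f (q.coeff i)]
      exact Ideal.mul_mem_mul (ih) hfI

/-- For a domain `A`, `0 ≠ f ∈ I`, the subring
`A[I/f] = {a/f^k : a ∈ I^k} ⊆ A_f` is `A`-algebra isomorphic to the quotient of the Rees
algebra `A[tI]` by the ideal generated by `1 - tf`. Formalized: there is an injective
`A`-algebra map from the Rees-algebra quotient to `Localization.Away f` whose range is
exactly the set `{x : ∃ k, ∃ a ∈ I^k, x·f^k = a}`. -/
theorem stmt_5 (A : Type*) [CommRing A] [IsDomain A] (f : A) (hf : f ≠ 0)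
    (I : Ideal A) (hfI : f ∈ I) (w : reesAlgebra I)
    (hw : (w : Polynomial A) = 1 - Polynomial.C f * Polynomial.X) :
    ∃ ψ : (reesAlgebra I ⧸ Ideal.span {w}) →ₐ[A] Localization.Away f,
      Function.Injective ψ ∧
      (ψ.range : Set (Localization.Away f)) =
        {x | ∃ k : ℕ, ∃ a ∈ I ^ k,
          x * algebraMap A (Localization.Away f) (f ^ k) =
            algebraMap A (Localization.Away f) a} := by
  classical
  haveI := IsLocalization.adjoin_inv f
  set g : A →+* Localization.Away f := algebraMap A (Localization.Away f) with hg
  set u : Localization.Away f := IsLocalization.Away.invSelf f with hu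
  have hfu : g f * u = 1 := IsLocalization.Away.mul_invSelf f
  let e : AdjoinRoot (C f * X - 1) ≃ₐ[A] Localization.Away f :=
    IsLocalization.algEquiv (Submonoid.powers f) _ _
  have heroot : e (AdjoinRoot.root (C f * X - 1)) = u := by
    have h1 : g f * e (AdjoinRoot.root (C f * X - 1)) = 1 := by
      have h0 := congrArg e (AdjoinRoot.root_isInv f)
      rw [← AdjoinRoot.algebraMap_eq, map_mul, map_one, AlgEquiv.commutes] at h0
      exact h0
    calc e (AdjoinRoot.root (C f * X - 1))
        = (g f * u) * e (AdjoinRoot.root (C f * X - 1)) := by rw [hfu, one_mul]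
      _ = u * (g f * e (AdjoinRoot.root (C f * X - 1))) := by ring
      _ = u := by rw [h1, mul_one]
  have hkey : ∀ p : A[X], aeval u p = 0 → (C f * X - 1) ∣ p := by
    intro p hp
    have h2 : e (AdjoinRoot.mk (C f * X - 1) p) = aeval u p := by
      rw [← AdjoinRoot.aeval_eq, ← heroot]
      exact (Polynomial.aeval_algHom_apply
        (e : AdjoinRoot (C f * X - 1) →ₐ[A] Localization.Away f) _ p).symm
    have h3 : AdjoinRoot.mk (C f * X - 1) p = 0 := by
      apply e.injective
      rw [h2, hp, map_zero]
    exact AdjoinRoot.mk_eq_zero.1 h3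
  let φ : reesAlgebra I →ₐ[A] Localization.Away f :=
    (Polynomial.aeval u).comp (reesAlgebra I).val
  have hφ : ∀ p : reesAlgebra I, φ p = aeval u (p : A[X]) := fun p => rfl
  have hφw : φ w = 0 := by
    rw [hφ, hw]
    rw [map_sub, map_one, map_mul, aeval_C, aeval_X]
    rw [← hg, hfu, sub_self]
  have hker : ∀ p : reesAlgebra I, φ p = 0 → p ∈ Ideal.span {w} := by
    intro p hp
    obtain ⟨q, hq⟩ := hkey (p : A[X]) (by rw [← hφ]; exact hp)
    have hq' : (p : A[X]) = (w : A[X]) * (-q) := by rw [hw, hq]; ring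
    have hmem : -q ∈ reesAlgebra I := by
      refine stmt5_aux_coeff hfI (-q) ?_
      rw [← hw, ← hq']
      exact p.2
    refine Ideal.mem_span_singleton.2 ⟨⟨-q, hmem⟩, ?_⟩
    exact Subtype.ext hq'
  have hφrange : ∀ p : A[X], p ∈ reesAlgebra I → ∃ k : ℕ, ∃ a ∈ I ^ k,
      aeval u p * g (f ^ k) = g a := by
    intro p hp
    rw [← adjoin_monomial_eq_reesAlgebra] at hp
    induction hp using Algebra.adjoin_induction with
    | mem x hx =>
        obtain ⟨r, hr, rfl⟩ := hx
        refine ⟨1, r, by rwa [pow_one], ?_⟩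
        rw [Polynomial.aeval_monomial, pow_one, pow_one, mul_assoc, mul_comm u (g f), hfu,
          mul_one]
    | algebraMap r =>
        refine ⟨0, r, by rw [pow_zero, Ideal.one_eq_top]; exact Submodule.mem_top, ?_⟩
        rw [pow_zero, map_one, mul_one]
        exact (Polynomial.aeval u).commutes r
    | add x y hx hy ihx ihy =>
        obtain ⟨k1, a1, h1, e1⟩ := ihx
        obtain ⟨k2, a2, h2, e2⟩ := ihy
        refine ⟨k1 + k2, a1 * f ^ k2 + f ^ k1 * a2, ?_, ?_⟩
        · rw [pow_add]
          exact add_mem (Ideal.mul_mem_mul h1 (Ideal.pow_mem_pow hfI k2))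
            (Ideal.mul_mem_mul (Ideal.pow_mem_pow hfI k1) h2)
        · simp only [map_add, map_mul, map_pow, pow_add] at e1 e2 ⊢
          linear_combination g f ^ k2 * e1 + g f ^ k1 * e2
    | mul x y hx hy ihx ihy =>
        obtain ⟨k1, a1, h1, e1⟩ := ihx
        obtain ⟨k2, a2, h2, e2⟩ := ihy
        refine ⟨k1 + k2, a1 * a2, by rw [pow_add]; exact Ideal.mul_mem_mul h1 h2, ?_⟩
        simp only [map_mul, map_pow, pow_add] at e1 e2 ⊢
        linear_combination (aeval u y * g f ^ k2) * e1 + g a1 * e2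
  refine ⟨Ideal.Quotient.liftₐ _ φ (fun a ha => ?_), ?_, ?_⟩
  · obtain ⟨c, rfl⟩ := Ideal.mem_span_singleton.1 ha
    rw [map_mul, hφw, zero_mul]
  · rw [injective_iff_map_eq_zero]
    intro x hx
    obtain ⟨p, rfl⟩ := Ideal.Quotient.mk_surjective x
    rw [Ideal.Quotient.eq_zero_iff_mem]
    refine hker p ?_
    exact hx
  · ext x
    simp only [SetLike.mem_coe, AlgHom.mem_range, Set.mem_setOf_eq]
    constructor
    · rintro ⟨y, rfl⟩
      obtain ⟨p, rfl⟩ := Ideal.Quotient.mk_surjective y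
      show ∃ k : ℕ, ∃ a ∈ I ^ k, φ p * g (f ^ k) = g a
      exact hφrange (p : A[X]) p.2
    · rintro ⟨k, a, ha, hxa⟩
      refine ⟨Ideal.Quotient.mk _ ⟨Polynomial.monomial k a, reesAlgebra.monomial_mem.mpr ha⟩, ?_⟩
      show φ ⟨Polynomial.monomial k a, reesAlgebra.monomial_mem.mpr ha⟩ = x
      show φ ⟨Polynomial.monomial k a, reesAlgebra.monomial_mem.mpr ha⟩ = x
      have : φ ⟨Polynomial.monomial k a, reesAlgebra.monomial_mem.mpr ha⟩
          = g a * u ^ k := by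
        rw [hφ]
        simp [Polynomial.aeval_monomial, hg]
      rw [this]
      calc g a * u ^ k = (x * g (f ^ k)) * u ^ k := by rw [hxa]
        _ = x * ((g f * u) ^ k) := by rw [map_pow, mul_pow]; ring
        _ = x := by rw [hfu, one_pow, mul_one]
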